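/- For any positive reals m, n, there exists α with |α| > 1 such that whenever σ² , σ*² > 0 satisfy σ*²/σ² ≤ 2, the Bayesian estimator (λ₀ = 0) satisfies (m·σ² + n·α²·σ*²)/(m + nα²)² ≤ (m·σ² + n·σ*²/α²)/(m+n)². -/

import Mathlib

/-- For any positive reals m, n there exists α with |α| > 1 such that, whenever
`σ*²/σ² ≤ 2`, `Var(f_BE) ≤ Var(f_GE)`. -/
theorem stmt_14 (m n : ℝ) (hm : 0 < m) (hn : 0 < n) :
    ∃ α : ℝ, 1 < |α| ∧ ∀ σ2 σs2 : ℝ, 0 < σ2 → 0 < σs2 → σs2 / σ2 ≤ 2 →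
      (m * σ2 + n * α ^ 2 * σs2) / (m + n * α ^ 2) ^ 2 ≤
        (m * σ2 + n * σs2 / α ^ 2) / (m + n) ^ 2 := by
  set K : ℝ := (2 * n * (m + n) ^ 2 + m * (m + n) ^ 2) / (m * n ^ 2) with hK
  have hKpos : 0 < K := by positivity
  refine ⟨K + 2, ?_, ?_⟩
  · rw [abs_of_pos (by linarith)]; linarith
  intro σ2 σs2 hσ2 hσs2 hle
  set α : ℝ := K + 2 with hα
  have hα1 : 1 < α := by simp [hα]; linarith
  have hαK : K ≤ α := by rw [hα]; linarith
  have ht1 : 1 ≤ α ^ 2 := by nlinarith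
  have htK : K ≤ α ^ 2 := by nlinarith
  have hKmul : m * n ^ 2 * K = 2 * n * (m + n) ^ 2 + m * (m + n) ^ 2 := by
    rw [hK]; field_simp
  -- key polynomial inequality
  have h1 : (2 * n * (m + n) ^ 2 + m * (m + n) ^ 2) * α ^ 2 ≤ m * n ^ 2 * α ^ 2 * α ^ 2 := by
    have := mul_le_mul_of_nonneg_left htK (by positivity : (0:ℝ) ≤ m * n ^ 2 * α ^ 2)
    nlinarith [this]
  have key : (m + n) ^ 2 * (m + 2 * n * α ^ 2) ≤ m * (m + n * α ^ 2) ^ 2 := by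
    nlinarith [h1,
      mul_le_mul_of_nonneg_left ht1 (show (0:ℝ) ≤ m * (m + n) ^ 2 by positivity),
      mul_le_mul_of_nonneg_left ht1 (show (0:ℝ) ≤ 2 * m ^ 2 * n by positivity)]
  have hs2 : σs2 ≤ 2 * σ2 := by
    rw [div_le_iff₀ hσ2] at hle; linarith
  have hd1 : (0:ℝ) < (m + n * α ^ 2) ^ 2 := by positivity
  have hd2 : (0:ℝ) < (m + n) ^ 2 := by positivity
  rw [div_le_div_iff₀ hd1 hd2]
  have hα2 : (0:ℝ) < α ^ 2 := by positivity
  have hnonneg : 0 ≤ n * σs2 / α ^ 2 := by positivity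
  calc (m * σ2 + n * α ^ 2 * σs2) * (m + n) ^ 2
      ≤ (m * σ2 + n * α ^ 2 * (2 * σ2)) * (m + n) ^ 2 := by
        nlinarith [mul_le_mul_of_nonneg_left hs2 (show (0:ℝ) ≤ n * α ^ 2 * (m + n) ^ 2 by positivity)]
    _ = σ2 * ((m + n) ^ 2 * (m + 2 * n * α ^ 2)) := by ring
    _ ≤ σ2 * (m * (m + n * α ^ 2) ^ 2) := by nlinarith
    _ = m * σ2 * (m + n * α ^ 2) ^ 2 := by ring
    _ ≤ (m * σ2 + n * σs2 / α ^ 2) * (m + n * α ^ 2) ^ 2 := by nlinarith [mul_nonneg hnonneg hd1.le]
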